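/- The map F_S sending a nonempty bounded closed set B ⊆ X to closure(⋃_{i ∈ I} f_i(B)) is well defined on nonempty bounded closed subsets and is Lipschitz with constant at most c with respect to the Hausdorff distance: for all nonempty bounded closed B, C ⊆ X, h(closure(⋃_{i∈I} f_i(B)), closure(⋃_{i∈I} f_i(C))) ≤ c · h(B, C). -/

import Mathlib

open scoped ENNReal NNReal
open Filter Topology

lemma lipschitz_infEdist_image {X : Type*} [PseudoEMetricSpace X] {c : ℝ≥0} {g : X → X}
    (h : LipschitzWith c g) (x : X) {s : Set X} (hs : s.Nonempty) :
    EMetric.infEdist (g x) (g '' s) ≤ c * EMetric.infEdist x s := by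
  have : Nonempty s := hs.to_subtype
  have h1 : EMetric.infEdist x s = ⨅ y : s, edist x (y : X) := by
    rw [EMetric.infEdist, Metric.infEDist, iInf_subtype']
  rw [h1, ENNReal.mul_iInf (by simp)]
  refine le_iInf fun y => ?_
  calc EMetric.infEdist (g x) (g '' s) ≤ edist (g x) (g y) :=
        EMetric.infEdist_le_edist_of_mem (Set.mem_image_of_mem _ y.2)
    _ ≤ c * edist x y := h x y

/-- For an IIFS `(f_i)_{i ∈ I}` on a complete metric space `X`, the map
`B ↦ closure (⋃ i, f_i '' B)` is well defined on nonempty bounded closed subsets of `X`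
and is Lipschitz with constant at most `c` for the Hausdorff distance. -/
theorem iifs_map_wellDefined_and_lipschitz {X : Type*} [MetricSpace X] [CompleteSpace X]
    {I : Type*} [Nonempty I] (f : I → X → X) (c : ℝ≥0) (hc : c < 1)
    (hlip : ∀ i : I, LipschitzWith c (f i))
    (hbdd : ∀ B : Set X, Bornology.IsBounded B → Bornology.IsBounded (⋃ i : I, f i '' B)) :
    (∀ B : Set X, B.Nonempty → Bornology.IsBounded B → IsClosed B →
      (closure (⋃ i : I, f i '' B)).Nonempty ∧
        Bornology.IsBounded (closure (⋃ i : I, f i '' B)) ∧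
        IsClosed (closure (⋃ i : I, f i '' B))) ∧
    (∀ B C : Set X, B.Nonempty → Bornology.IsBounded B → IsClosed B →
      C.Nonempty → Bornology.IsBounded C → IsClosed C →
      Metric.hausdorffDist (closure (⋃ i : I, f i '' B)) (closure (⋃ i : I, f i '' C)) ≤
        (c : ℝ) * Metric.hausdorffDist B C) := by
  have hne : ∀ B : Set X, B.Nonempty → (⋃ i : I, f i '' B).Nonempty := by
    intro B ⟨b, hb⟩
    obtain ⟨i⟩ := ‹Nonempty I›
    exact ⟨f i b, Set.mem_iUnion.2 ⟨i, Set.mem_image_of_mem _ hb⟩⟩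
  constructor
  · intro B hBne hBbdd _
    exact ⟨(hne B hBne).closure, (hbdd B hBbdd).closure, isClosed_closure⟩
  · intro B C hBne hBbdd _ hCne hCbdd _
    have key : EMetric.hausdorffEdist (⋃ i : I, f i '' B) (⋃ i : I, f i '' C) ≤
        (c : ℝ≥0∞) * EMetric.hausdorffEdist B C := by
      refine EMetric.hausdorffEdist_le_of_infEdist ?_ ?_
      · rintro x hx
        obtain ⟨i, b, hb, rfl⟩ := by simpa using hx
        calc EMetric.infEdist (f i b) (⋃ j : I, f j '' C)
            ≤ EMetric.infEdist (f i b) (f i '' C) :=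
              EMetric.infEdist_anti (Set.subset_iUnion (fun j => f j '' C) i)
          _ ≤ c * EMetric.infEdist b C := lipschitz_infEdist_image (hlip i) b hCne
          _ ≤ c * EMetric.hausdorffEdist B C :=
              mul_le_mul_right (EMetric.infEdist_le_hausdorffEdist_of_mem hb) _
      · rintro x hx
        obtain ⟨i, b, hb, rfl⟩ := by simpa using hx
        calc EMetric.infEdist (f i b) (⋃ j : I, f j '' B)
            ≤ EMetric.infEdist (f i b) (f i '' B) :=
              EMetric.infEdist_anti (Set.subset_iUnion (fun j => f j '' B) i)
          _ ≤ c * EMetric.infEdist b B := lipschitz_infEdist_image (hlip i) b hBne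
          _ ≤ c * EMetric.hausdorffEdist B C := by
              rw [EMetric.hausdorffEdist, Metric.hausdorffEDist_comm]
              exact mul_le_mul_right (EMetric.infEdist_le_hausdorffEdist_of_mem hb) _
    have hfin : EMetric.hausdorffEdist B C ≠ ⊤ :=
      Metric.hausdorffEdist_ne_top_of_nonempty_of_bounded hBne hCne hBbdd hCbdd
    rw [Metric.hausdorffDist_closure]
    rw [Metric.hausdorffDist, Metric.hausdorffDist,
      ← ENNReal.coe_toReal c, ← ENNReal.toReal_mul]
    exact ENNReal.toReal_mono (by finiteness) key
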